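/- Let A ⊆ P(I) be a finite poset under inclusion in which every chain has length at most 1, let H_c : E_c → ℝ (c ∈ A) be Hamiltonians, let a ∈ A be a linear point, and set B = A∖{a} with the restricted Hamiltonians i*H = (H_c)_{c∈B}. Let φ : L(A) → L(B) be the restriction map φ(Q) = (Q_c)_{c∈B}. Then for every Q ∈ L(A), BT_{A,H}(Q) = BT_{B,i*H}(φ(Q)). -/
import Mathlib


/- Setup: `I` a finite index set, `E i` nonempty finite sets of values, `A : Finset (Finset I)`
a collection of subsets of `I` ordered by inclusion.  For `a : Finset I`,
`Ea E a = ∏_{i ∈ a} E i`, with coordinate projections `proj`.  A family of "local functions"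
indexed by `A` is an element of `Fam E A`. -/

abbrev Ea {I : Type} (E : I → Type) (a : Finset I) : Type := (i : a) → E i

def proj {I : Type} (E : I → Type) {a b : Finset I} (h : b ⊆ a) (x : Ea E a) : Ea E b :=
  fun i => x ⟨i, h i.2⟩

abbrev Fam {I : Type} (E : I → Type) (A : Finset (Finset I)) : Type :=
  (a : A) → Ea E (a : Finset I) → ℝ

-- The local polytope `L(A)`: families of probability distributions compatible by marginalization.
open Classical in
def MemL {I : Type} (E : I → Type) [∀ i, Fintype (E i)] (A : Finset (Finset I))
    (Q : Fam E A) : Prop :=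
  (∀ a : A, (∀ x, 0 ≤ Q a x) ∧ (∑ x, Q a x) = 1) ∧
  (∀ (a b : A) (h : (b : Finset I) ⊆ (a : Finset I)) (x : Ea E (b : Finset I)),
    Q b x = ∑ y ∈ Finset.univ.filter (fun y : Ea E (a : Finset I) => proj E h y = x), Q a y)

-- The interior `L(A)°`: members of `L(A)` with all distributions strictly positive.
def MemLInt {I : Type} (E : I → Type) [∀ i, Fintype (E i)] (A : Finset (Finset I))
    (Q : Fam E A) : Prop :=
  MemL E A Q ∧ ∀ (a : A) (x : Ea E (a : Finset I)), 0 < Q a x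

-- The tangent space `TL(A)` of the local polytope.
open Classical in
def MemT {I : Type} (E : I → Type) [∀ i, Fintype (E i)] (A : Finset (Finset I))
    (u : Fam E A) : Prop :=
  (∀ a : A, (∑ x, u a x) = 0) ∧
  (∀ (a b : A) (h : (b : Finset I) ⊆ (a : Finset I)) (x : Ea E (b : Finset I)),
    u b x = ∑ y ∈ Finset.univ.filter (fun y : Ea E (a : Finset I) => proj E h y = x), u a y)

-- `μ` is the Möbius function of the poset `A` (ordered by inclusion): `μ x y = 0` for
-- `x, y ∈ A` with `¬ y ⊆ x`, and `∑_{b ∈ A, c ⊆ b ⊆ a} μ b c = δ_{a,c}` for `c ⊆ a` in `A`.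
open Classical in
def IsMobius {I : Type} (A : Finset (Finset I)) (μ : Finset I → Finset I → ℤ) : Prop :=
  (∀ x ∈ A, ∀ y ∈ A, ¬ y ⊆ x → μ x y = 0) ∧
  (∀ a ∈ A, ∀ c ∈ A, c ⊆ a →
    (∑ b ∈ A.filter (fun b => c ⊆ b ∧ b ⊆ a), μ b c) = if a = c then 1 else 0)

-- `c_A(x) = ∑_{b ∈ A, b ⊇ x} μ_A(b, x)`.
open Classical in
noncomputable def coefC {I : Type} (A : Finset (Finset I)) (μ : Finset I → Finset I → ℤ)
    (x : Finset I) : ℤ :=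
  ∑ b ∈ A.filter (fun b => x ⊆ b), μ b x

-- Shannon entropy `S(Q) = −∑_x Q x ln (Q x)` (with `0 ln 0 = 0`, as `Real.log 0 = 0`).
noncomputable def entropy {α : Type*} [Fintype α] (Q : α → ℝ) : ℝ :=
  -∑ x, Q x * Real.log (Q x)

-- The generalized Bethe free energy
-- `BT_{A,H}(Q) = ∑_{a ∈ A} c_A(a) (∑_x Q_a(x) H_a(x) − S(Q_a))`.
open Classical in
noncomputable def BT {I : Type} (E : I → Type) [∀ i, Fintype (E i)]
    (A : Finset (Finset I)) (μ : Finset I → Finset I → ℤ)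
    (H : (c : Finset I) → Ea E c → ℝ) (Q : Fam E A) : ℝ :=
  ∑ a : A, (coefC A μ (a : Finset I) : ℝ) *
    ((∑ x, Q a x * H (a : Finset I) x) - entropy (Q a))

-- A critical point of a functional `F` on `L(A)°`: a point `Q ∈ L(A)°` at which the
-- derivative at `t = 0` of `t ↦ F(Q + t u)` vanishes for every tangent vector `u ∈ TL(A)`.
open Classical in
def IsCritical {I : Type} (E : I → Type) [∀ i, Fintype (E i)]
    (A : Finset (Finset I)) (F : Fam E A → ℝ) (Q : Fam E A) : Prop :=
  MemLInt E A Q ∧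
  ∀ u : Fam E A, MemT E A u →
    deriv (fun t : ℝ => F (fun a x => Q a x + t * u a x)) 0 = 0

-- A global minimizer of `F` over `L(A)`.
def IsMinimizer {I : Type} (E : I → Type) [∀ i, Fintype (E i)]
    (A : Finset (Finset I)) (F : Fam E A → ℝ) (Q : Fam E A) : Prop :=
  MemL E A Q ∧ ∀ Q' : Fam E A, MemL E A Q' → F Q ≤ F Q'

-- Every chain of `A` has length at most 1: there is no chain `x ⊂ y ⊂ z` in `A`.
def ChainsShort {I : Type} (A : Finset (Finset I)) : Prop :=
  ∀ x ∈ A, ∀ y ∈ A, ∀ z ∈ A, x ⊂ y → y ⊂ z → False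

-- The restriction map `φ : L(A) → L(A∖{a})`, `φ(Q)_c = Q_c`.
def phiMap {I : Type} [DecidableEq I] (E : I → Type) (A : Finset (Finset I)) (a : Finset I)
    (Q : Fam E A) : Fam E (A.erase a) :=
  fun b => Q ⟨b, Finset.mem_of_mem_erase b.2⟩

open Classical in
lemma mobius_self {I : Type} {A : Finset (Finset I)}
    {μ : Finset I → Finset I → ℤ} (hμ : IsMobius A μ) {x : Finset I} (hx : x ∈ A) :
    μ x x = 1 := by
  have h := hμ.2 x hx x hx (subset_refl x)
  have hf : A.filter (fun b => x ⊆ b ∧ b ⊆ x) = {x} := by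
    ext y
    simp only [Finset.mem_filter, Finset.mem_singleton]
    constructor
    · rintro ⟨-, h1, h2⟩; exact subset_antisymm h2 h1
    · rintro rfl; exact ⟨hx, subset_refl _, subset_refl _⟩
  rw [hf, Finset.sum_singleton, if_pos rfl] at h
  exact h

open Classical in
lemma mobius_lt {I : Type} {A : Finset (Finset I)} (hchain : ChainsShort A)
    {μ : Finset I → Finset I → ℤ} (hμ : IsMobius A μ) {c b : Finset I}
    (hc : c ∈ A) (hb : b ∈ A) (hcb : c ⊂ b) : μ b c = -1 := by
  have h := hμ.2 b hb c hc hcb.subset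
  have hf : A.filter (fun y => c ⊆ y ∧ y ⊆ b) = {c, b} := by
    ext y
    simp only [Finset.mem_filter, Finset.mem_insert, Finset.mem_singleton]
    constructor
    · rintro ⟨hyA, h1, h2⟩
      by_cases h3 : y = c
      · exact Or.inl h3
      · by_cases h4 : y = b
        · exact Or.inr h4
        · exact absurd (hchain c hc y hyA b hb
            (Finset.ssubset_iff_subset_ne.mpr ⟨h1, fun e => h3 e.symm⟩)
            (Finset.ssubset_iff_subset_ne.mpr ⟨h2, h4⟩)) not_false
    · rintro (rfl | rfl)
      · exact ⟨hc, subset_refl _, hcb.subset⟩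
      · exact ⟨hb, hcb.subset, subset_refl _⟩
  have hne : c ≠ b := hcb.ne
  rw [hf, Finset.sum_pair hne, if_neg hne.symm, mobius_self hμ hc] at h
  omega

theorem stmt14' : True := trivial

open Classical in
-- Let `A ⊆ P(I)` be a finite poset under inclusion whose chains have length at most 1, with
-- Hamiltonians `H_c : E_c → ℝ`, let `a ∈ A` be a linear point (witness `aUp`), and let
-- `B = A∖{a}` carry the restricted Hamiltonians.  Then for every `Q ∈ L(A)`,
-- `BT_{A,H}(Q) = BT_{B,i*H}(φ(Q))`.
theorem stmt14 {I : Type} [Fintype I] [DecidableEq I]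
    (E : I → Type) [∀ i, Fintype (E i)] [∀ i, DecidableEq (E i)] [∀ i, Nonempty (E i)]
    (A : Finset (Finset I)) (hchain : ChainsShort A)
    (a aUp : Finset I) (haA : a ∈ A) (hUpA : aUp ∈ A) (hlt : a ⊂ aUp)
    (hlin : ∀ b ∈ A, a ⊂ b → aUp ⊆ b)
    (μA : Finset I → Finset I → ℤ) (hμA : IsMobius A μA)
    (μB : Finset I → Finset I → ℤ) (hμB : IsMobius (A.erase a) μB)
    (H : (c : Finset I) → Ea E c → ℝ)
    (Q : Fam E A) (hQ : MemL E A Q) :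
    BT E A μA H Q = BT E (A.erase a) μB H (phiMap E A a Q) := by
  classical
  have haUp_ne : a ≠ aUp := hlt.ne
  have hbelow : ∀ c ∈ A, ¬ c ⊂ a := fun c hc hca => hchain c hc a haA aUp hUpA hca hlt
  have hchainB : ChainsShort (A.erase a) := fun x hx y hy z hz =>
    hchain x (Finset.mem_of_mem_erase hx) y (Finset.mem_of_mem_erase hy)
      z (Finset.mem_of_mem_erase hz)
  -- c_A(a) = 0
  have hfa : ∀ (inst : DecidablePred (fun b : Finset I => a ⊆ b)),
      @Finset.filter _ _ inst A = {a, aUp} := by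
    intro inst
    ext b
    simp only [Finset.mem_filter, Finset.mem_insert, Finset.mem_singleton]
    constructor
    · rintro ⟨hbA, hab⟩
      by_cases h1 : b = a
      · exact Or.inl h1
      · refine Or.inr ?_
        have hss : a ⊂ b := Finset.ssubset_iff_subset_ne.mpr ⟨hab, fun e => h1 e.symm⟩
        have h2 : aUp ⊆ b := hlin b hbA hss
        by_contra h3
        exact hchain a haA aUp hUpA b hbA hlt
          (Finset.ssubset_iff_subset_ne.mpr ⟨h2, fun e => h3 e.symm⟩)
    · rintro (rfl | rfl)
      · exact ⟨haA, subset_refl _⟩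
      · exact ⟨hUpA, hlt.subset⟩
  have hca0 : coefC A μA a = 0 := by
    unfold coefC
    rw [hfa _, Finset.sum_pair haUp_ne, mobius_self hμA haA,
      mobius_lt hchain hμA haA hUpA hlt]
    omega
  -- c_A(c) = c_B(c) for c ∈ B
  have hcoef : ∀ c ∈ A.erase a, coefC A μA c = coefC (A.erase a) μB c := by
    intro c hc
    have hcA := Finset.mem_of_mem_erase hc
    have hcnea : c ≠ a := Finset.ne_of_mem_erase hc
    have hnotsub : ¬ c ⊆ a := fun h =>
      hbelow c hcA (Finset.ssubset_iff_subset_ne.mpr ⟨h, hcnea⟩)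
    unfold coefC
    have hfilter : ∀ (inst : DecidablePred (fun b : Finset I => c ⊆ b)),
        @Finset.filter _ _ inst (A.erase a) = @Finset.filter _ _ inst A := by
      intro inst
      ext b
      simp only [Finset.mem_filter, Finset.mem_erase]
      constructor
      · rintro ⟨⟨-, h1⟩, h2⟩; exact ⟨h1, h2⟩
      · rintro ⟨h1, h2⟩
        exact ⟨⟨fun e => hnotsub (e ▸ h2), h1⟩, h2⟩
    rw [hfilter _]
    refine Finset.sum_congr rfl fun b hb => ?_
    have hb' : b ∈ A.filter (fun b => c ⊆ b) := by
      convert hb using 2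
    have hbA : b ∈ A := (Finset.mem_filter.mp hb').1
    have hcb : c ⊆ b := (Finset.mem_filter.mp hb').2
    have hbB : b ∈ A.erase a :=
      Finset.mem_erase.mpr ⟨fun e => hnotsub (e ▸ hcb), hbA⟩
    by_cases hbc : b = c
    · subst hbc; rw [mobius_self hμA hcA, mobius_self hμB hc]
    · have hss : c ⊂ b := Finset.ssubset_iff_subset_ne.mpr ⟨hcb, fun e => hbc e.symm⟩
      rw [mobius_lt hchain hμA hcA hbA hss, mobius_lt hchainB hμB hc hbB hss]
  -- main computation
  unfold BT
  rw [Finset.univ_eq_attach, Finset.univ_eq_attach,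
    ← Finset.add_sum_erase _ _ (Finset.mem_attach A ⟨a, haA⟩)]
  have hz : (coefC A μA ((⟨a, haA⟩ : {x // x ∈ A}) : Finset I) : ℝ) = 0 := by
    rw [show ((⟨a, haA⟩ : {x // x ∈ A}) : Finset I) = a from rfl, hca0]; norm_num
  rw [hz, zero_mul, zero_add]
  refine Finset.sum_bij' (fun x hx => (⟨x.1, Finset.mem_erase.mpr
      ⟨fun e => (Finset.mem_erase.mp hx).1 (Subtype.ext e), x.2⟩⟩ : {y // y ∈ A.erase a}))
    (fun y _ => (⟨y.1, Finset.mem_of_mem_erase y.2⟩ : {x // x ∈ A})) ?_ ?_ ?_ ?_ ?_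
  · intro x hx; exact Finset.mem_attach _ _
  · intro y hy
    refine Finset.mem_erase.mpr ⟨?_, Finset.mem_attach _ _⟩
    intro e
    exact (Finset.mem_erase.mp y.2).1 (congrArg Subtype.val e)
  · intro x hx; rfl
  · intro y hy; rfl
  · intro x hx
    rw [hcoef x.1 (Finset.mem_erase.mpr
      ⟨fun e => (Finset.mem_erase.mp hx).1 (Subtype.ext e), x.2⟩)]
    rfl
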